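/- Let D be a strongly connected UDAF digraph with at least one edge. Then the quotient MS(D)/~_D of the multiset semigroup (nonzero elements of ℕ^{V_D}) by the congruence ~_D is an abelian group, isomorphic to the abelian group ℤ^{V_D}/⟨rows of Rel_D⟩, i.e., the abelian group presented by generators V_D and relations 0 = −v + Σ_w Adj_D(v,w)·w. -/

import Mathlib

structure Digraph' where
  V : Type
  E : Type
  s : E → V
  t : E → V

structure DHom (D₁ D₂ : Digraph') where
  vMap : D₁.V → D₂.V
  eMap : D₁.E → D₂.E
  hs : ∀ e, D₂.s (eMap e) = vMap (D₁.s e)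
  ht : ∀ e, D₂.t (eMap e) = vMap (D₁.t e)

def BiWalk (D : Digraph') : Type :=
  { f : ℤ → D.E // ∀ i : ℤ, D.t (f i) = D.s (f (i + 1)) }

def biMap {D₁ D₂ : Digraph'} (φ : DHom D₁ D₂) (w : BiWalk D₁) : BiWalk D₂ :=
  ⟨fun i => φ.eMap (w.1 i), fun i => by rw [φ.ht, φ.hs, w.2 i]⟩

structure FwdWalk (D : Digraph') where
  ed : ℕ → D.E
  chain : ∀ i : ℕ, D.t (ed i) = D.s (ed (i + 1))

structure BwdWalk (D : Digraph') where
  ed : ℕ → D.E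
  chain : ∀ i : ℕ, D.t (ed (i + 1)) = D.s (ed i)

/-- UDAF digraph condition: for each vertex, the number of infinite forwards walks
from it and of infinite backwards walks to it are each `≠ 1`. -/
def IsUDAF (D : Digraph') : Prop :=
  (∀ v : D.V, ¬∃! p : FwdWalk D, D.s (p.ed 0) = v) ∧
  (∀ v : D.V, ¬∃! p : BwdWalk D, D.t (p.ed 0) = v)

/-- Edges lying on some bi-infinite walk. -/
def CoreE (D : Digraph') : Set D.E := {e | ∃ w : BiWalk D, ∃ i : ℤ, w.1 i = e}

/-- Vertices lying on some bi-infinite walk. -/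
def CoreV (D : Digraph') : Set D.V := {v | ∃ w : BiWalk D, ∃ i : ℤ, D.s (w.1 i) = v}

structure FinWalk (D : Digraph') where
  start : D.V
  ed : List D.E
  chain : List.Chain' (fun a b => D.t a = D.s b) ed
  hstart : ∀ e ∈ ed.head?, D.s e = start

def endVert (D : Digraph') (p : FinWalk D) : D.V :=
  p.ed.getLast?.elim p.start D.t

noncomputable def adjCount (D : Digraph') (v w : D.V) : ℕ :=
  Set.ncard {e : D.E | D.s e = v ∧ D.t e = w}

open Classical in
/-- Row `v` of the relator matrix `Adj_D − I`. -/
noncomputable def relRow (D : Digraph') (v : D.V) : D.V → ℤ :=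
  fun w => (adjCount D v w : ℤ) - (if v = w then 1 else 0)

open Classical in
/-- The congruence on `ℕ^{V_D}` generated by `v = Σ_w Adj_D(v,w)·w`. -/
noncomputable def dimConFull (D : Digraph') : AddCon (D.V → ℕ) :=
  addConGen (fun A B => ∃ v : D.V,
    A = (fun w => if w = v then 1 else 0) ∧ B = fun w => adjCount D v w)

def toInt {D : Digraph'} (M : D.V → ℕ) : D.V → ℤ := fun v => (M v : ℤ)

def StrongConn (D : Digraph') : Prop :=
  ∀ v w : D.V, ∃ p : FinWalk D, p.start = v ∧ endVert D p = w

set_option linter.unusedSectionVars false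

namespace Stmt15Aux

variable {D : Digraph'} [Fintype D.V] [Fintype D.E]

open Classical in
noncomputable def delta (D : Digraph') (v : D.V) : D.V → ℕ :=
  fun w => if w = v then 1 else 0

noncomputable def arow (D : Digraph') (v : D.V) : D.V → ℕ := fun w => adjCount D v w

theorem con_gen (v : D.V) : dimConFull D (delta D v) (arow D v) :=
  AddConGen.Rel.of _ _ ⟨v, rfl, rfl⟩

theorem con_rel {A B : D.V → ℕ} (h : dimConFull D A B) :
    AddConGen.Rel (fun A B => ∃ v : D.V, A = delta D v ∧ B = arow D v) A B := h

theorem con_sum {ι : Type*} (s : Finset ι) (f g : ι → D.V → ℕ)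
    (h : ∀ i ∈ s, dimConFull D (f i) (g i)) :
    dimConFull D (∑ i ∈ s, f i) (∑ i ∈ s, g i) := by
  classical
  induction s using Finset.induction with
  | empty => simpa using (dimConFull D).refl 0
  | @insert _ _ hx ih =>
    rw [Finset.sum_insert hx, Finset.sum_insert hx]
    exact (dimConFull D).add (h _ (Finset.mem_insert_self _ _))
      (ih fun i hi => h i (Finset.mem_insert_of_mem hi))

theorem con_nsmul (n : ℕ) {a b : D.V → ℕ} (h : dimConFull D a b) :
    dimConFull D (n • a) (n • b) := by
  induction n with
  | zero => simpa using (dimConFull D).refl 0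
  | succ n ih =>
    rw [succ_nsmul, succ_nsmul]
    exact (dimConFull D).add ih h

theorem adjCount_pos {v w : D.V} (e : D.E) (hs : D.s e = v) (ht : D.t e = w) :
    1 ≤ adjCount D v w := by
  have hne : {e' : D.E | D.s e' = v ∧ D.t e' = w}.Nonempty := ⟨e, hs, ht⟩
  have := (Set.ncard_pos (Set.toFinite _)).mpr hne
  exact this

theorem exists_out (hsc : StrongConn D) (he : Nonempty D.E) (v : D.V) :
    ∃ e, D.s e = v := by
  obtain ⟨e₀⟩ := he
  obtain ⟨p, hstart, hend⟩ := hsc v (D.s e₀)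
  cases hp : p.ed with
  | nil =>
    refine ⟨e₀, ?_⟩
    have h1 : endVert D p = p.start := by simp [endVert, hp]
    rw [← hend, h1, hstart]
  | cons e l =>
    exact ⟨e, by rw [p.hstart e (by simp [hp]), hstart]⟩

theorem split_delta {A : D.V → ℕ} {w : D.V} (h : 1 ≤ A w) :
    A = delta D w + (A - delta D w) := by
  funext u
  by_cases hu : u = w
  · subst hu; simp [delta]; omega
  · simp [delta, hu]

theorem lastTarget_cons (e : D.E) (l : List D.E) (v : D.V) :
    ((e :: l).getLast?.elim v D.t) = (l.getLast?.elim (D.t e) D.t) := by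
  cases l with
  | nil => rfl
  | cons e' l' =>
    rw [List.getLast?_cons_cons]
    cases h : (e' :: l').getLast? with
    | none => exact absurd h (by simp)
    | some a => rfl

theorem list_walk : ∀ (l : List D.E) (v : D.V),
    l.Chain' (fun a b => D.t a = D.s b) → (∀ e ∈ l.head?, D.s e = v) →
    ∃ Ex, dimConFull D (delta D v) (delta D (l.getLast?.elim v D.t) + Ex) := by
  intro l
  induction l with
  | nil =>
    intro v _ _
    exact ⟨0, by simpa using (dimConFull D).refl (delta D v)⟩
  | cons e l ih =>
    intro v hc hh
    have hv : D.s e = v := hh e (by simp)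
    have h1 : 1 ≤ arow D v (D.t e) := adjCount_pos e hv rfl
    obtain ⟨Ex, hEx⟩ := ih (D.t e) hc.tail (by
      intro e' he'
      cases l with
      | nil => simp at he'
      | cons e'' l' =>
        simp only [List.head?_cons, Option.mem_def, Option.some.injEq] at he'
        subst he'
        exact (List.isChain_cons_cons.mp hc).1.symm)
    refine ⟨Ex + (arow D v - delta D (D.t e)), ?_⟩
    have c1 : dimConFull D (delta D v) (arow D v) := con_gen v
    have c2 : dimConFull D (arow D v)
        ((delta D (l.getLast?.elim (D.t e) D.t) + Ex) + (arow D v - delta D (D.t e))) := by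
      nth_rewrite 1 [split_delta h1]
      exact (dimConFull D).add hEx ((dimConFull D).refl _)
    have := (dimConFull D).trans c1 c2
    rw [lastTarget_cons, ← add_assoc]
    exact this

theorem walk_between (hsc : StrongConn D) (v w : D.V) :
    ∃ Ex, dimConFull D (delta D v) (delta D w + Ex) := by
  obtain ⟨p, h1, h2⟩ := hsc v w
  obtain ⟨Ex, h⟩ := list_walk p.ed p.start p.chain p.hstart
  refine ⟨Ex, ?_⟩
  have h3 : endVert D p = p.ed.getLast?.elim p.start D.t := rfl
  rw [← h2, h3, ← h1]
  exact h

theorem exists_fwd (hsc : StrongConn D) (he : Nonempty D.E) (v : D.V) :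
    ∃ p : FwdWalk D, D.s (p.ed 0) = v := by
  classical
  choose oe hoe using exists_out hsc he
  exact ⟨⟨fun n => Nat.rec (oe v) (fun _ e => oe (D.t e)) n,
    fun i => (hoe _).symm⟩, hoe v⟩

theorem exists_branch (hU : IsUDAF D) (hsc : StrongConn D) (he : Nonempty D.E) :
    ∃ (u : D.V) (e₁ e₂ : D.E), e₁ ≠ e₂ ∧ D.s e₁ = u ∧ D.s e₂ = u := by
  classical
  obtain ⟨e₀⟩ := id he
  obtain ⟨p, hp⟩ := exists_fwd hsc he (D.s e₀)
  have h2 : ¬ ∀ q : FwdWalk D, D.s (q.ed 0) = D.s e₀ → q = p :=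
    fun h => hU.1 _ ⟨p, hp, h⟩
  push_neg at h2
  obtain ⟨q, hq, hqp⟩ := h2
  have hed : ∃ i, q.ed i ≠ p.ed i := by
    by_contra h
    push_neg at h
    apply hqp
    cases p; cases q
    simp only [FwdWalk.mk.injEq]
    exact funext h
  obtain ⟨i, hi, hmin⟩ : ∃ i, q.ed i ≠ p.ed i ∧ ∀ j < i, q.ed j = p.ed j :=
    ⟨Nat.find hed, Nat.find_spec hed, fun j hj => not_not.mp (Nat.find_min hed hj)⟩
  have hsame : D.s (q.ed i) = D.s (p.ed i) := by
    cases i with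
    | zero => rw [hq, hp]
    | succ j => rw [← q.chain j, ← p.chain j, hmin j (Nat.lt_succ_self j)]
  exact ⟨D.s (p.ed i), q.ed i, p.ed i, hi, hsame, rfl⟩

theorem branch_split (hU : IsUDAF D) (hsc : StrongConn D) (he : Nonempty D.E) :
    ∃ (u a b : D.V) (R : D.V → ℕ), arow D u = delta D a + delta D b + R := by
  classical
  obtain ⟨u, e₁, e₂, hne, h1, h2⟩ := exists_branch hU hsc he
  refine ⟨u, D.t e₁, D.t e₂, arow D u - (delta D (D.t e₁) + delta D (D.t e₂)), ?_⟩
  have key : ∀ w, delta D (D.t e₁) w + delta D (D.t e₂) w ≤ arow D u w := by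
    intro w
    by_cases ha : w = D.t e₁ <;> by_cases hb : w = D.t e₂
    · have : 1 < adjCount D u w :=
        (Set.one_lt_ncard (Set.toFinite _)).mpr ⟨e₁, ⟨h1, ha.symm⟩, e₂, ⟨h2, hb.symm⟩, hne⟩
      simp only [delta, if_pos ha, if_pos hb, arow]
      omega
    · have : 1 ≤ adjCount D u w := adjCount_pos e₁ h1 ha.symm
      simp only [delta, if_pos ha, if_neg hb, arow]
      omega
    · have : 1 ≤ adjCount D u w := adjCount_pos e₂ h2 hb.symm
      simp only [delta, if_neg ha, if_pos hb, arow]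
      omega
    · simp [delta, ha, hb]
  funext w
  have := key w
  simp only [Pi.add_apply, Pi.sub_apply]
  omega

theorem double (hU : IsUDAF D) (hsc : StrongConn D) (he : Nonempty D.E) (v : D.V) :
    ∃ T, dimConFull D (delta D v) (delta D v + (delta D v + T)) := by
  obtain ⟨u, a, b, R, hsplit⟩ := branch_split hU hsc he
  obtain ⟨E, hE⟩ := walk_between hsc v u
  obtain ⟨Ea, hEa⟩ := walk_between hsc a v
  obtain ⟨Eb, hEb⟩ := walk_between hsc b v
  refine ⟨Ea + Eb + R + E, ?_⟩
  have c2 : dimConFull D (delta D u + E) (arow D u + E) :=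
    (dimConFull D).add (con_gen u) ((dimConFull D).refl E)
  have c3 : dimConFull D (arow D u + E)
      ((delta D v + Ea) + (delta D v + Eb) + R + E) := by
    rw [hsplit]
    exact (dimConFull D).add ((dimConFull D).add
      ((dimConFull D).add hEa hEb) ((dimConFull D).refl R)) ((dimConFull D).refl E)
  have := (dimConFull D).trans hE ((dimConFull D).trans c2 c3)
  have heq : delta D v + Ea + (delta D v + Eb) + R + E
      = delta D v + (delta D v + (Ea + Eb + R + E)) := by ring
  rw [heq] at this
  exact this

theorem iterate_pump {v : D.V} {Cv : D.V → ℕ}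
    (hcv : dimConFull D (delta D v) (delta D v + Cv)) :
    ∀ n : ℕ, dimConFull D (delta D v) (delta D v + n • Cv) := by
  intro n
  induction n with
  | zero => simpa using (dimConFull D).refl (delta D v)
  | succ n ih =>
    have step : dimConFull D (delta D v + n • Cv) (delta D v + Cv + n • Cv) :=
      (dimConFull D).add hcv ((dimConFull D).refl _)
    have heq : delta D v + Cv + n • Cv = delta D v + (n + 1) • Cv := by
      rw [succ_nsmul]; ring
    rw [heq] at step
    exact (dimConFull D).trans ih step

theorem sum_smul_delta (B : D.V → ℕ) : ∑ w, B w • delta D w = B := by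
  classical
  funext u
  simp [delta, Finset.sum_apply, Finset.sum_ite_eq]

theorem divide (hU : IsUDAF D) (hsc : StrongConn D) (he : Nonempty D.E)
    (v : D.V) (B : D.V → ℕ) : ∃ Cx, dimConFull D (delta D v) (B + Cx) := by
  classical
  obtain ⟨T, hT⟩ := double hU hsc he v
  set Cv := delta D v + T with hCv
  choose Ew hEw using walk_between hsc v
  rcases Nat.eq_zero_or_pos (∑ w, B w) with hN | hN
  · have hB : B = 0 := by
      funext u
      exact Finset.sum_eq_zero_iff.mp hN u (Finset.mem_univ u)
    exact ⟨delta D v, by rw [hB, zero_add]; exact (dimConFull D).refl _⟩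
  · obtain ⟨m, hm⟩ : ∃ m, ∑ w, B w = m + 1 := ⟨∑ w, B w - 1, by omega⟩
    have h1 : dimConFull D (delta D v) (delta D v + m • Cv) := iterate_pump hT m
    have h2 : delta D v + m • Cv = (∑ w, B w) • delta D v + m • T := by
      rw [hm, hCv, smul_add, succ_nsmul]; ring
    have h3 : (∑ w, B w) • delta D v = ∑ w, B w • delta D v := by
      rw [Finset.sum_smul]
    have h4 : dimConFull D (∑ w, B w • delta D v) (∑ w, B w • (delta D w + Ew w)) :=
      con_sum _ _ _ fun w _ => con_nsmul (B w) (hEw w)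
    have h5 : ∑ w, B w • (delta D w + Ew w) = B + ∑ w, B w • Ew w := by
      simp_rw [smul_add]
      rw [Finset.sum_add_distrib, sum_smul_delta]
    refine ⟨∑ w, B w • Ew w + m • T, ?_⟩
    have h6 : dimConFull D ((∑ w, B w) • delta D v + m • T)
        ((B + ∑ w, B w • Ew w) + m • T) := by
      rw [h3, ← h5]
      exact (dimConFull D).add h4 ((dimConFull D).refl _)
    have h7 : (B + ∑ w, B w • Ew w) + m • T = B + (∑ w, B w • Ew w + m • T) := by ring
    rw [h7] at h6
    rw [h2] at h1
    exact (dimConFull D).trans h1 h6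

theorem pi_add_eq_zero {A B : D.V → ℕ} : A + B = 0 ↔ A = 0 ∧ B = 0 := by
  constructor
  · intro h
    constructor <;> funext v <;> have := congrFun h v <;>
      simp only [Pi.add_apply, Pi.zero_apply] at this ⊢ <;> omega
  · rintro ⟨rfl, rfl⟩
    simp

theorem con_zero_iff (hsc : StrongConn D) (he : Nonempty D.E) {A B : D.V → ℕ}
    (h : dimConFull D A B) : A = 0 ↔ B = 0 := by
  have h' := con_rel h
  clear h
  induction h' with
  | of x y hxy =>
    obtain ⟨v, rfl, rfl⟩ := hxy
    constructor <;> intro h0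
    · exact absurd (congrFun h0 v) (by simp [delta])
    · obtain ⟨e, hev⟩ := exists_out hsc he v
      have h1 : 1 ≤ arow D v (D.t e) := adjCount_pos e hev rfl
      have := congrFun h0 (D.t e)
      simp only [Pi.zero_apply] at this
      omega
  | refl x => exact Iff.rfl
  | symm _ ih => exact ih.symm
  | trans _ _ ih1 ih2 => exact ih1.trans ih2
  | add _ _ ih1 ih2 =>
    rw [pi_add_eq_zero, pi_add_eq_zero]
    exact and_congr ih1 ih2

theorem exists_delta {M : D.V → ℕ} (h : M ≠ 0) :
    ∃ v M₀, M = delta D v + M₀ := by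
  have h1 : ∃ v, M v ≠ 0 := by
    by_contra h'
    push_neg at h'
    exact h (funext fun v => h' v)
  obtain ⟨v, hv⟩ := h1
  exact ⟨v, M - delta D v, split_delta (by omega)⟩

/-- The absorbing element. -/
theorem absorb_setup (hU : IsUDAF D) (hsc : StrongConn D) (he : Nonempty D.E) :
    ∃ eA : D.V → ℕ, eA ≠ 0 ∧ ∀ M : D.V → ℕ, M ≠ 0 → dimConFull D M (M + eA) := by
  obtain ⟨e₀⟩ := id he
  set v₀ := D.s e₀ with hv₀
  obtain ⟨T, hT⟩ := double hU hsc he v₀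
  refine ⟨delta D v₀ + T, ?_, ?_⟩
  · intro h0
    have := congrFun ((pi_add_eq_zero.mp h0).1) v₀
    simp [delta] at this
  · intro M hM
    obtain ⟨w, M₀, rfl⟩ := exists_delta hM
    obtain ⟨E, hE⟩ := walk_between hsc w v₀
    -- delta w ~ delta v₀ + E ~ (delta v₀ + (delta v₀ + T)) + E ~ delta w + (delta v₀ + T)
    have c1 : dimConFull D (delta D v₀ + E) (delta D v₀ + (delta D v₀ + T) + E) :=
      (dimConFull D).add hT ((dimConFull D).refl E)
    have c2 : dimConFull D (delta D v₀ + E + (delta D v₀ + T)) (delta D w + (delta D v₀ + T)) :=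
      (dimConFull D).add ((dimConFull D).symm hE) ((dimConFull D).refl _)
    have heq : delta D v₀ + (delta D v₀ + T) + E = delta D v₀ + E + (delta D v₀ + T) := by ring
    rw [heq] at c1
    have c3 : dimConFull D (delta D w) (delta D w + (delta D v₀ + T)) :=
      (dimConFull D).trans hE ((dimConFull D).trans c1 c2)
    have c4 := (dimConFull D).add c3 ((dimConFull D).refl M₀)
    have heq2 : delta D w + (delta D v₀ + T) + M₀ = delta D w + M₀ + (delta D v₀ + T) := by ring
    rw [heq2] at c4
    exact c4

theorem cancel (hU : IsUDAF D) (hsc : StrongConn D) (he : Nonempty D.E)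
    {A B Y : D.V → ℕ} (hA : A ≠ 0) (hB : B ≠ 0)
    (h : dimConFull D (A + Y) (B + Y)) : dimConFull D A B := by
  obtain ⟨eA, heA, habs⟩ := absorb_setup hU hsc he
  by_cases hY : Y = 0
  · subst hY; simpa using h
  · -- inverse of Y: find N with con (Y + N) eA
    obtain ⟨v₀, E₀, hE₀⟩ := exists_delta heA
    obtain ⟨X, hX⟩ := divide hU hsc he v₀ Y
    -- eA = delta v₀ + E₀ ~ (Y + X) + E₀, so Y + (X + E₀ + eA) ~ eA + eA ~ eA
    have c1 : dimConFull D eA (Y + X + E₀) := by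
      rw [hE₀]
      exact (dimConFull D).add hX ((dimConFull D).refl E₀)
    have c2 : dimConFull D (Y + (X + E₀ + eA)) (eA + eA) := by
      have := (dimConFull D).add ((dimConFull D).symm c1) ((dimConFull D).refl eA)
      have heq : Y + (X + E₀ + eA) = Y + X + E₀ + eA := by ring
      rw [heq]
      exact this
    have c3 : dimConFull D (eA + eA) eA := (dimConFull D).symm (habs eA heA)
    set N := X + E₀ + eA with hN
    have hYN : dimConFull D (Y + N) eA := (dimConFull D).trans c2 c3
    -- now cancel
    have d1 : dimConFull D A (A + eA) := habs A hA
    have d2 : dimConFull D (A + eA) (A + (Y + N)) :=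
      (dimConFull D).add ((dimConFull D).refl A) ((dimConFull D).symm hYN)
    have d3 : dimConFull D (A + Y + N) (B + Y + N) :=
      (dimConFull D).add h ((dimConFull D).refl N)
    have d4 : dimConFull D (B + Y + N) (B + eA) := by
      have := (dimConFull D).add ((dimConFull D).refl B) hYN
      have heq : B + (Y + N) = B + Y + N := by ring
      rw [heq] at this
      exact this
    have d5 : dimConFull D (B + eA) B := (dimConFull D).symm (habs B hB)
    have heq2 : A + (Y + N) = A + Y + N := by ring
    rw [heq2] at d2
    exact (dimConFull D).trans d1 ((dimConFull D).trans d2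
      ((dimConFull D).trans d3 ((dimConFull D).trans d4 d5)))

theorem mem_closure_iff_combo (x : D.V → ℤ) :
    x ∈ AddSubgroup.closure (Set.range (relRow D)) ↔
      ∃ n : D.V → ℤ, ∑ v, n v • relRow D v = x := by
  classical
  constructor
  · intro hx
    refine AddSubgroup.closure_induction (p := fun x _ => ∃ n : D.V → ℤ, ∑ v, n v • relRow D v = x) ?_ ?_ ?_ ?_ hx
    · rintro _ ⟨v, rfl⟩
      refine ⟨fun w => if w = v then 1 else 0, ?_⟩
      simp [ite_smul, Finset.sum_ite_eq']
    · exact ⟨0, by simp⟩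
    · rintro a b _ _ ⟨n, rfl⟩ ⟨m, rfl⟩
      exact ⟨n + m, by simp [add_smul, Finset.sum_add_distrib]⟩
    · rintro a _ ⟨n, rfl⟩
      refine ⟨-n, ?_⟩
      simp [neg_smul, ← Finset.sum_neg_distrib]
  · rintro ⟨n, rfl⟩
    exact AddSubgroup.sum_mem _ fun v _ =>
      AddSubgroup.zsmul_mem _ (AddSubgroup.subset_closure (Set.mem_range_self v)) _

theorem toInt_add (A B : D.V → ℕ) : toInt (A + B) = toInt A + toInt B := by
  funext v; simp [toInt]

theorem toInt_nsmul (n : ℕ) (A : D.V → ℕ) : toInt (n • A) = (n : ℤ) • toInt A := by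
  funext v; simp [toInt, mul_comm]

theorem toInt_sum {ι : Type*} (s : Finset ι) (f : ι → D.V → ℕ) :
    toInt (∑ i ∈ s, f i) = ∑ i ∈ s, toInt (f i) := by
  funext v; simp [toInt, Finset.sum_apply]

theorem toInt_inj {A B : D.V → ℕ} (h : toInt A = toInt B) : A = B :=
  funext fun v => Nat.cast_injective (congrFun h v)

theorem toInt_delta_sub_arow (v : D.V) :
    toInt (delta D v) - toInt (arow D v) = -(relRow D v) := by
  classical
  funext w
  by_cases h : v = w
  · subst h; simp [toInt, delta, arow, relRow]
  · simp [toInt, delta, arow, relRow, h, Ne.symm h]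

theorem con_sub_mem {A B : D.V → ℕ} (h : dimConFull D A B) :
    toInt A - toInt B ∈ AddSubgroup.closure (Set.range (relRow D)) := by
  have h' := con_rel h
  clear h
  induction h' with
  | of x y hxy =>
    obtain ⟨v, rfl, rfl⟩ := hxy
    rw [toInt_delta_sub_arow]
    exact neg_mem (AddSubgroup.subset_closure ⟨v, rfl⟩)
  | refl x => rw [sub_self]; exact zero_mem _
  | symm _ ih =>
    rw [show ∀ a b : D.V → ℤ, a - b = -(b - a) from fun a b => by ring]
    exact neg_mem ih
  | trans _ _ ih1 ih2 =>
    rw [show ∀ a b c : D.V → ℤ, a - c = (a - b) + (b - c) from fun a b c => by ring]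
    exact add_mem ih1 ih2
  | add _ _ ih1 ih2 =>
    rw [toInt_add, toInt_add,
      show ∀ a b c d : D.V → ℤ, (a + c) - (b + d) = (a - b) + (c - d) from
        fun a b c d => by ring]
    exact add_mem ih1 ih2

theorem relRow_eq (v : D.V) :
    relRow D v = toInt (arow D v) - toInt (delta D v) := by
  calc relRow D v = -(-(relRow D v)) := (neg_neg _).symm
  _ = -(toInt (delta D v) - toInt (arow D v)) := by rw [toInt_delta_sub_arow]
  _ = toInt (arow D v) - toInt (delta D v) := neg_sub _ _

theorem backward (hU : IsUDAF D) (hsc : StrongConn D) (he : Nonempty D.E)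
    {M₁ M₂ : D.V → ℕ} (h₁ : M₁ ≠ 0) (h₂ : M₂ ≠ 0)
    (hmem : toInt M₂ - toInt M₁ ∈ AddSubgroup.closure (Set.range (relRow D))) :
    dimConFull D M₁ M₂ := by
  classical
  obtain ⟨n, hn⟩ := (mem_closure_iff_combo _).mp hmem
  set p : D.V → ℕ := fun v => (n v).toNat with hp
  set q : D.V → ℕ := fun v => (-(n v)).toNat with hq
  have hn' : ∑ v, (((p v : ℤ)) - (q v : ℤ)) • (toInt (arow D v) - toInt (delta D v))
      = toInt M₂ - toInt M₁ := by
    rw [← hn]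
    refine Finset.sum_congr rfl fun v _ => ?_
    rw [relRow_eq]
    congr 1
    simp only [hp, hq]
    omega
  have expand :
      ∑ v, (((p v : ℤ)) - (q v : ℤ)) • (toInt (arow D v) - toInt (delta D v))
        = ((∑ v, (p v : ℤ) • toInt (arow D v)) + ∑ v, (q v : ℤ) • toInt (delta D v))
          - ((∑ v, (q v : ℤ) • toInt (arow D v)) + ∑ v, (p v : ℤ) • toInt (delta D v)) := by
    simp_rw [sub_smul, smul_sub]
    rw [Finset.sum_sub_distrib, Finset.sum_sub_distrib, Finset.sum_sub_distrib]
    ring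
  rw [expand] at hn'
  set X := (∑ v, p v • arow D v) + (∑ v, q v • delta D v) with hX
  set Y := (∑ v, p v • delta D v) + (∑ v, q v • arow D v) with hY
  have eX : toInt X = (∑ v, (p v : ℤ) • toInt (arow D v)) + ∑ v, (q v : ℤ) • toInt (delta D v) := by
    rw [hX, toInt_add, toInt_sum, toInt_sum]
    simp_rw [toInt_nsmul]
  have eY : toInt Y = (∑ v, (q v : ℤ) • toInt (arow D v)) + ∑ v, (p v : ℤ) • toInt (delta D v) := by
    rw [hY, toInt_add, toInt_sum, toInt_sum]
    simp_rw [toInt_nsmul]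
    ring
  have hXY : M₁ + X = M₂ + Y := by
    apply toInt_inj
    rw [toInt_add M₁ X, toInt_add M₂ Y, eX, eY]
    linear_combination hn'
  set S := (∑ v, p v • arow D v) + (∑ v, q v • arow D v) with hS
  have cX : dimConFull D X S := by
    rw [hX, hS]
    exact (dimConFull D).add ((dimConFull D).refl _)
      (con_sum _ _ _ fun v _ => con_nsmul (q v) (con_gen v))
  have cY : dimConFull D Y S := by
    rw [hY, hS]
    exact (dimConFull D).add
      (con_sum Finset.univ _ _ fun v _ => con_nsmul (p v) (con_gen v))
      ((dimConFull D).refl (∑ v, q v • arow D v))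
  have c1 : dimConFull D (M₁ + S) (M₁ + X) :=
    (dimConFull D).add ((dimConFull D).refl M₁) ((dimConFull D).symm cX)
  have c2 : dimConFull D (M₂ + Y) (M₂ + S) :=
    (dimConFull D).add ((dimConFull D).refl M₂) cY
  have c3 : dimConFull D (M₁ + S) (M₂ + S) := by
    rw [hXY] at c1
    exact (dimConFull D).trans c1 c2
  exact cancel hU hsc he h₁ h₂ c3

theorem pos_vector (hU : IsUDAF D) (hsc : StrongConn D) (he : Nonempty D.E) :
    ∃ P : D.V → ℤ, P ∈ AddSubgroup.closure (Set.range (relRow D)) ∧ ∀ v, 1 ≤ P v := by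
  classical
  choose T hT using double hU hsc he
  refine ⟨∑ v, toInt (delta D v + T v), ?_, ?_⟩
  · refine AddSubgroup.sum_mem _ fun v _ => ?_
    have h1 := con_sub_mem (hT v)
    have h2 : toInt (delta D v) - toInt (delta D v + (delta D v + T v))
        = -(toInt (delta D v + T v)) := by
      rw [toInt_add, toInt_add]
      ring
    rw [h2] at h1
    simpa using neg_mem h1
  · intro v
    rw [Finset.sum_apply]
    have hv : 1 ≤ toInt (delta D v + T v) v := by
      simp [toInt, delta]
    calc (1:ℤ) ≤ toInt (delta D v + T v) v := hv
    _ ≤ ∑ w, toInt (delta D w + T w) v :=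
      Finset.single_le_sum (fun w _ => Int.natCast_nonneg _) (Finset.mem_univ v)

theorem surj (hU : IsUDAF D) (hsc : StrongConn D) (he : Nonempty D.E) (x : D.V → ℤ) :
    ∃ M : D.V → ℕ, M ≠ 0 ∧ toInt M - x ∈ AddSubgroup.closure (Set.range (relRow D)) := by
  classical
  obtain ⟨P, hPmem, hPpos⟩ := pos_vector hU hsc he
  set k : ℕ := Finset.univ.sup fun v => (1 - x v).toNat with hk
  have hVne : Nonempty D.V := ⟨D.s (Classical.choice he)⟩
  set M : D.V → ℕ := fun v => (x v + (k:ℤ) * P v).toNat with hM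
  have hpos : ∀ v, 1 ≤ x v + (k:ℤ) * P v := by
    intro v
    have h3 : (k:ℤ) ≤ (k:ℤ) * P v :=
      le_mul_of_one_le_right (Int.natCast_nonneg k) (hPpos v)
    have h4 : (1 - x v) ≤ ((1 - x v).toNat : ℤ) := Int.self_le_toNat _
    have h5 : ((1 - x v).toNat : ℤ) ≤ (k : ℤ) :=
      Nat.cast_le.mpr (Finset.le_sup (f := fun v => (1 - x v).toNat) (Finset.mem_univ v))
    linarith
  have htoInt : toInt M = x + fun v => (k:ℤ) * P v := by
    funext v
    simp only [toInt, hM, Pi.add_apply]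
    rw [Int.toNat_of_nonneg (by linarith [hpos v])]
  refine ⟨M, ?_, ?_⟩
  · intro h0
    obtain ⟨v₀⟩ := hVne
    have h6 := congrFun h0 v₀
    simp only [hM, Pi.zero_apply] at h6
    have := hpos v₀
    omega
  · have heq : toInt M - x = (k : ℤ) • P := by
      rw [htoInt]
      funext v
      simp [mul_comm]
    rw [heq]
    exact AddSubgroup.zsmul_mem _ hPmem _

end Stmt15Aux


open Stmt15Aux

/-- For a strongly connected UDAF digraph with an edge, the quotient of the
multiset semigroup (nonzero multisets) by `∼_D` is an abelian group, isomorphic to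
`ℤ^{V_D}` modulo the subgroup generated by the rows of the relator matrix: the
natural map is additive, identifies exactly `∼_D`-related nonzero multisets, and
every element of the group is the image of a nonzero multiset. -/
theorem stmt15 (D : Digraph') [Fintype D.V] [Fintype D.E]
    (hU : IsUDAF D) (hsc : StrongConn D) (he : Nonempty D.E) :
    ∀ f : (D.V → ℕ) → ((D.V → ℤ) ⧸ AddSubgroup.closure (Set.range (relRow D))),
      (∀ M, f M = QuotientAddGroup.mk (toInt M)) →
      (∀ M₁ M₂ : D.V → ℕ, M₁ ≠ 0 → M₂ ≠ 0 → (dimConFull D M₁ M₂ ↔ f M₁ = f M₂)) ∧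
      (∀ g, ∃ M : D.V → ℕ, M ≠ 0 ∧ f M = g) ∧
      (∀ M₁ M₂, f (M₁ + M₂) = f M₁ + f M₂) := by
  intro f hf
  classical
  refine ⟨?_, ?_, ?_⟩
  · intro M₁ M₂ h₁ h₂
    constructor
    · intro h
      rw [hf, hf]
      refine (QuotientAddGroup.eq).mpr ?_
      have hm := con_sub_mem h
      have heq : -(toInt M₁) + toInt M₂ = -(toInt M₁ - toInt M₂) := by ring
      rw [heq]
      exact neg_mem hm
    · intro h
      rw [hf, hf] at h
      have hm := (QuotientAddGroup.eq).mp h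
      have heq : toInt M₂ - toInt M₁ = -(toInt M₁) + toInt M₂ := by ring
      exact backward hU hsc he h₁ h₂ (heq ▸ hm)
  · intro g
    obtain ⟨x, rfl⟩ := QuotientAddGroup.mk_surjective g
    obtain ⟨M, hM0, hMx⟩ := surj hU hsc he x
    refine ⟨M, hM0, ?_⟩
    rw [hf]
    refine (QuotientAddGroup.eq).mpr ?_
    have heq : -(toInt M) + x = -(toInt M - x) := by ring
    rw [heq]
    exact neg_mem hMx
  · intro M₁ M₂
    rw [hf, hf, hf, toInt_add]
    rfl
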